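/- Let y = x′β₀ + e with x a random vector in ℝᵖ, e a real random variable independent of x with E[e] = 0, all with finite second moments; let λ > 0 and H₀ the distribution of (x, y). Define the ridge functional R(H) = (E_H[xx′] + 2λI_p)⁻¹·E_H[xy] and write β_R = R(H₀). Fix (x₀, y₀) and let H_ε = (1 − ε)H₀ + ε·δ_{(x₀,y₀)}. Then ε ↦ R(H_ε) is differentiable at 0 with derivative (E_{H₀}[xx′] + 2λI_p)⁻¹·((y₀ − x₀′β_R)·x₀ + E_{H₀}[xx′]·(β_R − β₀)). -/

import Mathlib

open MeasureTheory Matrix ProbabilityTheory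

lemma integrable_dirac'' {α E : Type*} [MeasurableSpace α] [MeasurableSingletonClass α]
    [NormedAddCommGroup E] {f : α → E} (hf : StronglyMeasurable f) (a : α) :
    Integrable f (Measure.dirac a) :=
  ⟨hf.aestronglyMeasurable, by simp [HasFiniteIntegral, lintegral_dirac]⟩

/-- Influence function of the ridge functional. Under the model
`y = x'β₀ + e` with `x ⊥ e` and `E[e] = 0`, the map `ε ↦ R(H_ε)` with
`H_ε = (1-ε)H₀ + ε·δ_{(x₀,y₀)}` and `R(H) = (E_H[xx'] + 2λI)⁻¹E_H[xy]` is
differentiable at `0` with derivative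
`(E_{H₀}[xx'] + 2λI)⁻¹·((y₀ - x₀'β_R)x₀ + E_{H₀}[xx']·(β_R - β₀))`. -/
theorem influence_function_ridge
    {p : ℕ} {Ω : Type*} [MeasurableSpace Ω] (μ : Measure Ω) [IsProbabilityMeasure μ]
    (X : Ω → (Fin p → ℝ)) (e : Ω → ℝ) (hXm : Measurable X) (hem : Measurable e)
    (hind : IndepFun X e μ)
    (hX1 : ∀ i, Integrable (fun ω => X ω i) μ) (he1 : Integrable e μ)
    (hXX : ∀ i j, Integrable (fun ω => X ω i * X ω j) μ)
    (hXe : ∀ i, Integrable (fun ω => X ω i * e ω) μ)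
    (he2 : Integrable (fun ω => (e ω) ^ 2) μ)
    (hmean : ∫ ω, e ω ∂μ = 0)
    (β₀ : Fin p → ℝ)
    (H₀ : Measure ((Fin p → ℝ) × ℝ))
    (hH₀ : H₀ = μ.map (fun ω => (X ω, X ω ⬝ᵥ β₀ + e ω)))
    (lam : ℝ) (hlam : 0 < lam)
    (R : Measure ((Fin p → ℝ) × ℝ) → (Fin p → ℝ))
    (hR : ∀ ν : Measure ((Fin p → ℝ) × ℝ),
      R ν = (Matrix.of (fun i j => ∫ z, z.1 i * z.1 j ∂ν)
          + (2 * lam) • (1 : Matrix (Fin p) (Fin p) ℝ))⁻¹.mulVec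
        (fun i => ∫ z, z.1 i * z.2 ∂ν))
    (x₀ : Fin p → ℝ) (y₀ : ℝ)
    (βR : Fin p → ℝ) (hβR : βR = R H₀) :
    HasDerivWithinAt
      (fun ε : ℝ =>
        R (ENNReal.ofReal (1 - ε) • H₀ + ENNReal.ofReal ε • Measure.dirac (x₀, y₀)))
      ((Matrix.of (fun i j => ∫ z, z.1 i * z.1 j ∂H₀)
          + (2 * lam) • (1 : Matrix (Fin p) (Fin p) ℝ))⁻¹.mulVec
        (fun i => (y₀ - x₀ ⬝ᵥ βR) * x₀ i
          + (Matrix.of (fun i j => ∫ z, z.1 i * z.1 j ∂H₀)).mulVec (βR - β₀) i))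
      (Set.Ici 0) 0 := by
  classical
  set A : Matrix (Fin p) (Fin p) ℝ := Matrix.of (fun i j => ∫ z, z.1 i * z.1 j ∂H₀) with hA
  set b : Fin p → ℝ := fun i => ∫ z, z.1 i * z.2 ∂H₀ with hb
  set B : Matrix (Fin p) (Fin p) ℝ := Matrix.of (fun i j => x₀ i * x₀ j) with hBdef
  set c : Fin p → ℝ := fun i => x₀ i * y₀ with hc
  set M₀ : Matrix (Fin p) (Fin p) ℝ := A + (2 * lam) • 1 with hM₀
  -- measurability of the defining map
  have hT : Measurable (fun ω => (X ω, X ω ⬝ᵥ β₀ + e ω)) := by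
    refine hXm.prodMk (Measurable.add ?_ hem)
    exact Finset.measurable_sum _ (fun i _ => (hXm.eval (a := i)).mul_const _)
  -- continuity of the integrands
  have hcXX : ∀ i j : Fin p, Continuous (fun z : (Fin p → ℝ) × ℝ => z.1 i * z.1 j) :=
    fun i j => ((continuous_apply i).comp continuous_fst).mul
      ((continuous_apply j).comp continuous_fst)
  have hcXY : ∀ i : Fin p, Continuous (fun z : (Fin p → ℝ) × ℝ => z.1 i * z.2) :=
    fun i => ((continuous_apply i).comp continuous_fst).mul continuous_snd
  -- values of entries of A
  have hAval : ∀ i j, A i j = ∫ ω, X ω i * X ω j ∂μ := by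
    intro i j
    show (∫ z, z.1 i * z.1 j ∂H₀) = _
    rw [hH₀, integral_map hT.aemeasurable (hcXX i j).aestronglyMeasurable]
  -- integrability under H₀
  have hIA : ∀ i j, Integrable (fun z : (Fin p → ℝ) × ℝ => z.1 i * z.1 j) H₀ := by
    intro i j
    rw [hH₀, integrable_map_measure (hcXX i j).aestronglyMeasurable hT.aemeasurable]
    exact hXX i j
  have hIb : ∀ i, Integrable (fun z : (Fin p → ℝ) × ℝ => z.1 i * z.2) H₀ := by
    intro i
    rw [hH₀, integrable_map_measure (hcXY i).aestronglyMeasurable hT.aemeasurable]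
    have : ((fun z : (Fin p → ℝ) × ℝ => z.1 i * z.2) ∘ fun ω => (X ω, X ω ⬝ᵥ β₀ + e ω))
        = fun ω => (∑ j, β₀ j * (X ω i * X ω j)) + X ω i * e ω := by
      funext ω
      simp only [Function.comp_apply, dotProduct]
      rw [mul_add, Finset.mul_sum]
      congr 1
      exact Finset.sum_congr rfl (fun j _ => by ring)
    rw [this]
    exact (integrable_finset_sum _ (fun j _ => (hXX i j).const_mul (β₀ j))).add (hXe i)
  -- b = A β₀
  have hbeq : b = A.mulVec β₀ := by
    funext i
    have hXe0 : ∫ ω, X ω i * e ω ∂μ = 0 := by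
      have hind' : IndepFun (fun ω => X ω i) e μ :=
        hind.comp (measurable_pi_apply i) measurable_id
      have h := hind'.integral_mul_eq_mul_integral (hX1 i).aestronglyMeasurable he1.aestronglyMeasurable
      simpa [hmean] using h
    have hbi : b i = ∫ ω, X ω i * (X ω ⬝ᵥ β₀ + e ω) ∂μ := by
      show (∫ z, z.1 i * z.2 ∂H₀) = _
      rw [hH₀, integral_map hT.aemeasurable (hcXY i).aestronglyMeasurable]
    have hsplit : (fun ω => X ω i * (X ω ⬝ᵥ β₀ + e ω))
        = fun ω => (∑ j, β₀ j * (X ω i * X ω j)) + X ω i * e ω := by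
      funext ω
      simp only [dotProduct]
      rw [mul_add, Finset.mul_sum]
      congr 1
      exact Finset.sum_congr rfl (fun j _ => by ring)
    rw [hbi, hsplit, integral_add (integrable_finset_sum _
        (fun j _ => (hXX i j).const_mul (β₀ j))) (hXe i), hXe0, add_zero,
      integral_finset_sum _ (fun j _ => (hXX i j).const_mul (β₀ j))]
    show _ = ∑ j, A i j * β₀ j
    exact Finset.sum_congr rfl (fun j _ => by rw [integral_const_mul, hAval]; ring)
  -- invertibility of M₀
  have hApsd : A.PosSemidef := by
    refine Matrix.PosSemidef.of_dotProduct_mulVec_nonneg ?_ ?_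
    · ext i j
      simp only [conjTranspose_apply, star_trivial]
      show A j i = A i j
      rw [hAval, hAval]
      exact integral_congr_ae (Filter.Eventually.of_forall (fun ω => mul_comm _ _))
    · intro x
      have hpt : ∀ ω, ∑ i, ∑ j, x i * (X ω i * X ω j * x j) = (∑ i, x i * X ω i) ^ 2 := by
        intro ω
        rw [sq, Finset.sum_mul_sum]
        exact Finset.sum_congr rfl fun i _ => Finset.sum_congr rfl fun j _ => by ring
      have hxAx : star x ⬝ᵥ A *ᵥ x = ∫ ω, (∑ i, x i * X ω i) ^ 2 ∂μ := by
        simp only [star_trivial, dotProduct, mulVec, hAval]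
        have h1 : ∀ i : Fin p, x i * ∑ j, (∫ ω, X ω i * X ω j ∂μ) * x j
            = ∫ ω, ∑ j, x i * (X ω i * X ω j * x j) ∂μ := by
          intro i
          rw [integral_finset_sum _ (fun j _ => ((hXX i j).mul_const (x j)).const_mul (x i)),
            Finset.mul_sum]
          refine Finset.sum_congr rfl fun j _ => ?_
          rw [← integral_mul_const, ← integral_const_mul]
        rw [Finset.sum_congr rfl (fun i _ => h1 i),
          ← integral_finset_sum _ (fun i _ => integrable_finset_sum _
            (fun j _ => (((hXX i j).mul_const (x j)).const_mul (x i))))]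
        exact integral_congr_ae (Filter.Eventually.of_forall (fun ω => hpt ω))
      rw [hxAx]
      exact integral_nonneg (fun ω => sq_nonneg _)
  have hdet0 : IsUnit M₀.det := by
    have h1 : ((2 * lam) • (1 : Matrix (Fin p) (Fin p) ℝ)).PosDef := by
      rw [Matrix.smul_one_eq_diagonal]
      exact Matrix.PosDef.diagonal (fun i => by positivity)
    exact ((Matrix.PosDef.posSemidef_add hApsd h1).det_pos).ne'.isUnit
  have hdetne : M₀.det ≠ 0 := by
    intro h
    rw [h] at hdet0
    exact (not_isUnit_zero : ¬ IsUnit (0:ℝ)) hdet0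
  -- the affine path
  set g : ℝ → (Fin p → ℝ) :=
    fun ε => (M₀ + ε • (B - A))⁻¹.mulVec (b + ε • (c - b)) with hg
  have hg0 : g 0 = M₀⁻¹.mulVec b := by simp [hg]
  have hβRg : βR = g 0 := by
    rw [hβR, hR, hg0]
  -- R(H_ε) = g ε on [0,1]
  have hfg : ∀ ε ∈ Set.Icc (0:ℝ) 1,
      R (ENNReal.ofReal (1 - ε) • H₀ + ENNReal.ofReal ε • Measure.dirac (x₀, y₀)) = g ε := by
    intro ε hε
    have hmix : ∀ f : (Fin p → ℝ) × ℝ → ℝ, Integrable f H₀ → Continuous f →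
        (∫ z, f z ∂(ENNReal.ofReal (1-ε) • H₀ + ENNReal.ofReal ε • Measure.dirac (x₀, y₀)))
          = (1-ε) * ∫ z, f z ∂H₀ + ε * f (x₀, y₀) := by
      intro f hf hfc
      rw [integral_add_measure (hf.smul_measure ENNReal.ofReal_ne_top)
          ((integrable_dirac'' hfc.stronglyMeasurable _).smul_measure ENNReal.ofReal_ne_top),
        integral_smul_measure, integral_smul_measure, integral_dirac,
        ENNReal.toReal_ofReal (by linarith [hε.2]), ENNReal.toReal_ofReal hε.1]
      norm_num
    have hmat : (Matrix.of (fun i j => ∫ z, z.1 i * z.1 j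
          ∂(ENNReal.ofReal (1-ε) • H₀ + ENNReal.ofReal ε • Measure.dirac (x₀, y₀)))
          + (2 * lam) • (1 : Matrix (Fin p) (Fin p) ℝ))
        = M₀ + ε • (B - A) := by
      ext i j
      rw [Matrix.add_apply, Matrix.of_apply, hmix _ (hIA i j) (hcXX i j),
        (show (∫ z, z.1 i * z.1 j ∂H₀) = A i j from rfl)]
      simp only [hM₀, Matrix.add_apply, Matrix.smul_apply, Matrix.sub_apply, hBdef,
        Matrix.of_apply, smul_eq_mul]
      ring
    have hvecε : (fun i => ∫ z, z.1 i * z.2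
          ∂(ENNReal.ofReal (1-ε) • H₀ + ENNReal.ofReal ε • Measure.dirac (x₀, y₀)))
        = b + ε • (c - b) := by
      funext i
      rw [hmix _ (hIb i) (hcXY i), (show (∫ z, z.1 i * z.2 ∂H₀) = b i from rfl)]
      simp only [Pi.add_apply, Pi.smul_apply, Pi.sub_apply, smul_eq_mul]
      show (1-ε) * b i + ε * (x₀ i * y₀) = _
      rw [(show x₀ i * y₀ = c i from rfl)]
      ring
    rw [hR, hmat, hvecε]
  clear_value g M₀ b A
  -- continuity facts
  have hMcont : Continuous (fun ε : ℝ => M₀ + ε • (B - A)) :=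
    continuous_const.add (continuous_id.smul continuous_const)
  have hM00 : (M₀ + (0:ℝ) • (B - A)) = M₀ := by simp
  have hdetev : ∀ᶠ ε in nhds (0:ℝ), IsUnit (M₀ + ε • (B - A)).det := by
    have hca : ContinuousAt (fun ε : ℝ => (M₀ + ε • (B - A)).det) 0 :=
      (hMcont.matrix_det).continuousAt
    have hne : (fun ε : ℝ => (M₀ + ε • (B - A)).det) 0 ≠ 0 := by
      show (M₀ + (0:ℝ) • (B - A)).det ≠ 0
      rw [hM00]; exact hdetne
    exact (hca.eventually_ne hne).mono (fun ε h => isUnit_iff_ne_zero.mpr h)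
  have hginvca : ContinuousAt (fun ε : ℝ => (M₀ + ε • (B - A))⁻¹) 0 := by
    have h1' : ContinuousAt Inv.inv M₀ := by
      apply continuousAt_matrix_inv
      rw [Ring.inverse_eq_inv']
      exact continuousAt_inv₀ hdetne
    have h1 : ContinuousAt Inv.inv (M₀ + (0:ℝ) • (B - A)) := by
      rw [hM00]; exact h1'
    exact ContinuousAt.comp (f := fun ε : ℝ => M₀ + ε • (B - A)) h1 hMcont.continuousAt
  have hgcont : ContinuousAt g 0 := by
    have hjoint : Continuous (fun q : Matrix (Fin p) (Fin p) ℝ × (Fin p → ℝ) => q.1 *ᵥ q.2) :=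
      continuous_fst.matrix_mulVec continuous_snd
    have h2 : Continuous (fun ε : ℝ => b + ε • (c - b)) :=
      continuous_const.add (continuous_id.smul continuous_const)
    rw [hg]
    exact hjoint.continuousAt.comp (hginvca.prodMk h2.continuousAt)
  -- the key algebraic identity and the slope
  have hkey : ∀ ε : ℝ, IsUnit (M₀ + ε • (B - A)).det →
      g ε = M₀⁻¹.mulVec ((b + ε • (c - b)) - ε • ((B - A).mulVec (g ε))) := by
    intro ε hu
    have h1 : (M₀ + ε • (B - A)).mulVec (g ε) = b + ε • (c - b) := by
      simp only [hg]
      rw [Matrix.mulVec_mulVec, Matrix.mul_nonsing_inv _ hu, Matrix.one_mulVec]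
    have h2 : M₀.mulVec (g ε) = (b + ε • (c - b)) - ε • ((B - A).mulVec (g ε)) := by
      rw [← h1, Matrix.add_mulVec, Matrix.smul_mulVec, add_sub_cancel_right]
    calc g ε = M₀⁻¹.mulVec (M₀.mulVec (g ε)) := by
                rw [Matrix.mulVec_mulVec, Matrix.nonsing_inv_mul _ hdet0, Matrix.one_mulVec]
      _ = _ := by rw [h2]
  have hslope : ∀ ε : ℝ, ε ≠ 0 → IsUnit (M₀ + ε • (B - A)).det →
      slope g 0 ε = M₀⁻¹.mulVec ((c - b) - (B - A).mulVec (g ε)) := by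
    intro ε hne hu
    rw [slope_def_module, sub_zero]
    have h4 : g ε - g 0 = ε • (M₀⁻¹.mulVec ((c - b) - (B - A).mulVec (g ε))) := by
      conv_lhs => rw [hkey ε hu, hg0]
      rw [← Matrix.mulVec_sub]
      conv_rhs => rw [← Matrix.mulVec_smul]
      refine congrArg (fun v => M₀⁻¹.mulVec v) ?_
      module
    rw [h4, inv_smul_smul₀ hne]
  -- limit of the slope
  have hmem : ∀ᶠ ε in nhdsWithin (0:ℝ) (Set.Ici 0 \ {0}),
      slope g 0 ε = M₀⁻¹.mulVec ((c - b) - (B - A).mulVec (g ε)) := by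
    have h1 : ∀ᶠ ε in nhdsWithin (0:ℝ) (Set.Ici 0 \ {0}), IsUnit (M₀ + ε • (B - A)).det :=
      hdetev.filter_mono nhdsWithin_le_nhds
    have h2 : ∀ᶠ ε in nhdsWithin (0:ℝ) (Set.Ici 0 \ {0}), ε ≠ 0 := by
      filter_upwards [self_mem_nhdsWithin] with ε hε
      exact hε.2
    filter_upwards [h1, h2] with ε hu hne
    exact hslope ε hne hu
  have hφcont : ContinuousAt (fun ε : ℝ => M₀⁻¹.mulVec ((c - b) - (B - A).mulVec (g ε))) 0 := by
    have hout : Continuous (fun v : Fin p → ℝ => M₀⁻¹.mulVec ((c - b) - (B - A).mulVec v)) :=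
      Continuous.matrix_mulVec continuous_const
        (continuous_const.sub (Continuous.matrix_mulVec continuous_const continuous_id))
    exact hout.continuousAt.comp hgcont
  have htends : Filter.Tendsto (fun ε : ℝ => M₀⁻¹.mulVec ((c - b) - (B - A).mulVec (g ε)))
      (nhdsWithin (0:ℝ) (Set.Ici 0 \ {0}))
      (nhds (M₀⁻¹.mulVec ((c - b) - (B - A).mulVec (g 0)))) :=
    (hφcont.tendsto).mono_left nhdsWithin_le_nhds
  have hgderiv : HasDerivWithinAt g (M₀⁻¹.mulVec ((c - b) - (B - A).mulVec (g 0)))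
      (Set.Ici 0) 0 := by
    rw [hasDerivWithinAt_iff_tendsto_slope]
    exact Filter.Tendsto.congr' (hmem.mono fun ε h => h.symm) htends
  -- identify the derivative
  have hvec : (fun i => (y₀ - x₀ ⬝ᵥ βR) * x₀ i + A.mulVec (βR - β₀) i)
      = ((c - b) - (B - A).mulVec (g 0)) := by
    rw [← hβRg]
    funext i
    have hAv : (A.mulVec (βR - β₀)) i = (∑ j, A i j * βR j) - ∑ j, A i j * β₀ j := by
      show ∑ j, A i j * (βR j - β₀ j) = _
      rw [← Finset.sum_sub_distrib]
      exact Finset.sum_congr rfl fun j _ => by ring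
    have hBAv : ((B - A).mulVec βR) i = (∑ j, x₀ i * x₀ j * βR j) - ∑ j, A i j * βR j := by
      show ∑ j, (B - A) i j * βR j = _
      rw [← Finset.sum_sub_distrib]
      refine Finset.sum_congr rfl fun j _ => ?_
      rw [(show (B - A) i j = x₀ i * x₀ j - A i j from rfl)]
      ring
    have hbi : b i = ∑ j, A i j * β₀ j := by
      rw [hbeq]; rfl
    have hdot : x₀ ⬝ᵥ βR = ∑ j, x₀ j * βR j := rfl
    show (y₀ - x₀ ⬝ᵥ βR) * x₀ i + (A.mulVec (βR - β₀)) i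
        = (c i - b i) - ((B - A).mulVec βR) i
    rw [hAv, hBAv, hbi, hdot, (show c i = x₀ i * y₀ from rfl), sub_mul]
    have h1 : (∑ j, x₀ j * βR j) * x₀ i = ∑ j, x₀ i * x₀ j * βR j := by
      rw [Finset.sum_mul]; exact Finset.sum_congr rfl fun j _ => by ring
    rw [h1]
    ring
  rw [hvec]
  refine hgderiv.congr_of_eventuallyEq ?_ ?_
  · exact Filter.eventually_of_mem (Icc_mem_nhdsGE one_pos) hfg
  · exact hfg 0 ⟨le_rfl, zero_le_one⟩
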